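/- Let G be a finite simple graph on [n] with an isolated vertex i and at least one edge e ∈ E(G). For each k ≥ 1 let u_k = (∏_{j∈[n]∖e} x_j)^k / x_i. Then (I_c(G)^k : u_k) = (x_i). -/
import Mathlib


open MvPolynomial

private lemma X_dvd_sub_aeval {K : Type*} [CommRing K] {σ : Type*} [DecidableEq σ]
    (i : σ) (f : MvPolynomial σ K) :
    X i ∣ f - aeval (fun j : σ => if j = i then (0 : MvPolynomial σ K) else X j) f := by
  induction f using MvPolynomial.induction_on with
  | C a => simp
  | add p q hp hq =>
      have : p + q - aeval (fun j : σ => if j = i then (0 : MvPolynomial σ K) else X j) (p + q)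
          = (p - aeval (fun j : σ => if j = i then (0 : MvPolynomial σ K) else X j) p)
            + (q - aeval (fun j : σ => if j = i then (0 : MvPolynomial σ K) else X j) q) := by
        rw [map_add]; ring
      rw [this]
      exact dvd_add hp hq
  | mul_X p j hp =>
      rw [map_mul, aeval_X]
      by_cases hj : j = i
      · subst hj
        rw [if_pos rfl, mul_zero, sub_zero]
        exact dvd_mul_left _ _
      · rw [if_neg hj]
        have : p * X j - aeval (fun t : σ => if t = i then (0 : MvPolynomial σ K) else X t) p * X j
            = (p - aeval (fun t : σ => if t = i then (0 : MvPolynomial σ K) else X t) p) * X j := by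
          ring
        rw [this]
        exact hp.mul_right _

/-- The complementary edge ideal `I_c(G) = ((x_1⋯x_n)/(x_i x_j) : {i,j} ∈ E(G))`. -/
noncomputable def compEdgeIdeal (K : Type*) [Field K] (V : Type*) [Fintype V] [DecidableEq V]
    (G : SimpleGraph V) : Ideal (MvPolynomial V K) :=
  Ideal.span {m | ∃ i j, G.Adj i j ∧ m = ∏ t ∈ Finset.univ \ {i, j}, X t}

/-- If `i` is an isolated vertex of `G` and `e = {a,b}` is an edge, then with
`u_k = (∏_{j∉e} x_j)^k / x_i = x_i^{k−1} (∏_{j∉e∪{i}} x_j)^k` one has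
`(I_c(G)^k : u_k) = (x_i)`. -/
theorem stmt11 {K : Type*} [Field K] {n : ℕ} (G : SimpleGraph (Fin n))
    (i : Fin n) (hiso : ∀ j, ¬ G.Adj i j)
    (a b : Fin n) (hab : G.Adj a b)
    (k : ℕ) (hk : 1 ≤ k) (u : MvPolynomial (Fin n) K)
    (hu : u = X i ^ (k - 1) * (∏ t ∈ Finset.univ \ {a, b, i}, X t) ^ k) :
    Submodule.colon ((compEdgeIdeal K (Fin n) G) ^ k) (Ideal.span {u}) =
      Ideal.span {X i} := by
  have hia : i ≠ a := by rintro rfl; exact hiso b hab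
  have hib : i ≠ b := by rintro rfl; exact hiso a hab.symm
  set w : MvPolynomial (Fin n) K := ∏ t ∈ Finset.univ \ {a, b, i}, X t with hw
  have hk1 : k - 1 + 1 = k := by omega
  -- the generator corresponding to the edge {a,b}
  have hgen : (∏ t ∈ Finset.univ \ ({a, b} : Finset (Fin n)), X t)
      ∈ compEdgeIdeal K (Fin n) G :=
    Ideal.subset_span ⟨a, b, hab, rfl⟩
  have hset : (Finset.univ \ ({a, b} : Finset (Fin n)))
      = insert i (Finset.univ \ {a, b, i}) := by
    ext t
    simp only [Finset.mem_sdiff, Finset.mem_univ, Finset.mem_insert, true_and]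
    by_cases ht : t = i <;> simp [ht, hia, hib]
  have hnotmem : i ∉ Finset.univ \ ({a, b, i} : Finset (Fin n)) := by simp
  have hgenprod : (∏ t ∈ Finset.univ \ ({a, b} : Finset (Fin n)), X t)
      = X i * w := by
    rw [hset, Finset.prod_insert hnotmem]
  -- X i * u = (X i * w) ^ k
  have hXiu : X i * u = (X i * w) ^ k := by
    rw [hu, mul_pow, ← mul_assoc, ← pow_succ', hk1]
  -- I ≤ span {X i}
  have hIle : compEdgeIdeal K (Fin n) G ≤ Ideal.span {X i} := by
    rw [compEdgeIdeal, Ideal.span_le]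
    rintro m ⟨p, q, hpq, rfl⟩
    rw [SetLike.mem_coe, Ideal.mem_span_singleton]
    apply Finset.dvd_prod_of_mem
    simp only [Finset.mem_sdiff, Finset.mem_univ, Finset.mem_insert,
      Finset.mem_singleton, true_and]
    push_neg
    exact ⟨fun h => hiso q (h ▸ hpq), fun h => hiso p (h ▸ hpq.symm)⟩
  have hIkle : (compEdgeIdeal K (Fin n) G) ^ k ≤ Ideal.span {X i ^ k} := by
    rw [← Ideal.span_singleton_pow]
    exact Ideal.pow_right_mono hIle k
  -- the substitution killing X i
  set ψ : MvPolynomial (Fin n) K →ₐ[K] MvPolynomial (Fin n) K :=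
    aeval (fun j : Fin n => if j = i then (0 : MvPolynomial (Fin n) K) else X j) with hψ
  have hψw : ψ w = w := by
    rw [hw, map_prod]
    apply Finset.prod_congr rfl
    intro t ht
    have hti : t ≠ i := by
      simp only [Finset.mem_sdiff, Finset.mem_univ, Finset.mem_insert,
        Finset.mem_singleton, true_and] at ht
      tauto
    simp [hψ, hti]
  have hwne : (w : MvPolynomial (Fin n) K) ≠ 0 := by
    rw [hw]
    exact Finset.prod_ne_zero_iff.mpr fun t _ => X_ne_zero t
  apply le_antisymm
  · -- colon ≤ span {X i}
    intro f hf
    have hmul : f * u ∈ (compEdgeIdeal K (Fin n) G) ^ k := by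
      have := Submodule.mem_colon.mp hf u (Ideal.mem_span_singleton_self u)
      simpa [smul_eq_mul] using this
    have hdvd : X i ^ k ∣ f * u := Ideal.mem_span_singleton.mp (hIkle hmul)
    rw [Ideal.mem_span_singleton]
    have hdvd2 : X i ^ (k - 1) * X i ∣ X i ^ (k - 1) * (f * w ^ k) := by
      rw [← pow_succ, hk1]
      calc X i ^ k ∣ f * u := hdvd
        _ = X i ^ (k - 1) * (f * w ^ k) := by rw [hu]; ring
    have hdvd3 : X i ∣ f * w ^ k :=
      (mul_dvd_mul_iff_left (pow_ne_zero _ (X_ne_zero (R := K) i))).mp hdvd2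
    -- apply ψ : conclude ψ f = 0
    obtain ⟨c, hc⟩ := hdvd3
    have hψf : ψ f * w ^ k = 0 := by
      have := congrArg ψ hc
      rw [map_mul, map_mul, map_pow, hψw] at this
      simpa [hψ] using this
    have hψf0 : ψ f = 0 := by
      rcases mul_eq_zero.mp hψf with h | h
      · exact h
      · exact absurd h (pow_ne_zero _ hwne)
    have := X_dvd_sub_aeval i f
    rw [← hψ, hψf0, sub_zero] at this
    exact this
  · -- span {X i} ≤ colon
    rw [Ideal.span_le]
    rintro x hx
    simp only [Set.mem_singleton_iff] at hx
    subst hx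
    rw [SetLike.mem_coe, Submodule.mem_colon]
    intro p hp
    obtain ⟨c, rfl⟩ := Ideal.mem_span_singleton'.mp hp
    have heq : (X i : MvPolynomial (Fin n) K) • (c * u) = c * ((X i * w) ^ k) := by
      rw [smul_eq_mul, ← hXiu]; ring
    rw [heq]
    refine Ideal.mul_mem_left _ _ (Ideal.pow_mem_pow ?_ k)
    rwa [hgenprod] at hgen
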